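/- Let d ≥ 3 and let φ be a C^d function on an interval containing s_1 ≤ s_2 ≤ … ≤ s_d. Let 𝒥_d(s; φ) be the determinant of the d×d matrix whose j-th column is (1, s_j, …, s_j^{d−2}/(d−2)!, φ′(s_j))^T. Then 𝒥_d(s; φ) = ∫_{s_1}^{s_2} … ∫_{s_{d−1}}^{s_d} 𝒥_{d−1}(σ_1,…,σ_{d−1}; φ′) dσ_{d−1} … dσ_1. -/

import Mathlib

open MeasureTheory

/-- `𝒥_d(s;φ)`: determinant of the `d×d` matrix whose `j`-th column is
`(1, s_j, s_j²/2!, …, s_j^{d-2}/(d-2)!, φ'(s_j))ᵀ`. -/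
noncomputable def Jdet (d : ℕ) (φ : ℝ → ℝ) (s : Fin d → ℝ) : ℝ :=
  Matrix.det (Matrix.of fun i j : Fin d =>
    if (i : ℕ) + 1 < d then (s j) ^ (i : ℕ) / (Nat.factorial i) else deriv φ (s j))

/-- Iterated integral, the `j`-th variable running from `s j` to `s (j+1)`. -/
noncomputable def iterInt : (k : ℕ) → ((Fin k → ℝ) → ℝ) → (Fin (k + 1) → ℝ) → ℝ
  | 0, f, _ => f (fun i => i.elim0)
  | (k + 1), f, s =>
      ∫ x in (s 0)..(s 1), iterInt k (fun u => f (Fin.cons x u)) (fun i => s i.succ)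

namespace Stmt4Aux

/-- Plain column of the determinant: `(1, t, t²/2!, …, t^{d-2}/(d-2)!, φ'(t))ᵀ`. -/
noncomputable def ccol (d : ℕ) (φ : ℝ → ℝ) (t : ℝ) (i : Fin d) : ℝ :=
  if (i : ℕ) + 1 < d then t ^ (i : ℕ) / (Nat.factorial i) else deriv φ t

/-- Derivative of `ccol` with respect to `t`. -/
noncomputable def cder (d : ℕ) (φ : ℝ → ℝ) (t : ℝ) (i : Fin d) : ℝ :=
  if (i : ℕ) = 0 then 0
  else if (i : ℕ) + 1 < d then t ^ ((i : ℕ) - 1) / (Nat.factorial ((i : ℕ) - 1))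
  else deriv (deriv φ) t

/-- Determinant where the first `j` columns are differentiated columns at `v`,
the remaining ones plain columns at the corresponding entries of `s`. -/
noncomputable def Edet (d : ℕ) (φ : ℝ → ℝ) (s : Fin d → ℝ) (j : ℕ) (v : Fin j → ℝ) : ℝ :=
  Matrix.det (Matrix.of fun i col : Fin d =>
    if h : (col : ℕ) < j then cder d φ (v ⟨col, h⟩) i else ccol d φ (s col) i)

lemma hasDerivAt_ccol (d : ℕ) (hd2 : 2 ≤ d) (φ : ℝ → ℝ) {x : ℝ}
    (hd : HasDerivAt (deriv φ) (deriv (deriv φ) x) x) (i : Fin d) :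
    HasDerivAt (fun t => ccol d φ t i) (cder d φ x i) x := by
  unfold ccol cder
  by_cases h : (i : ℕ) + 1 < d
  · simp only [if_pos h]
    have h2 := (hasDerivAt_pow (i : ℕ) x).div_const (Nat.factorial (i : ℕ))
    refine h2.congr_deriv ?_
    rcases Nat.eq_zero_or_pos (i : ℕ) with h0 | h0
    · simp [h0]
    · obtain ⟨k, hk⟩ : ∃ k, (i : ℕ) = k + 1 := ⟨(i : ℕ) - 1, by omega⟩
      rw [hk]
      simp only [Nat.add_sub_cancel, Nat.factorial_succ]
      push_cast
      have hk0 : (Nat.factorial k : ℝ) ≠ 0 := by positivity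
      field_simp
  · have hi : (i : ℕ) = d - 1 := by have := i.isLt; omega
    simp only [if_neg h, if_neg (show ¬ (i : ℕ) = 0 by omega)]
    exact hd

lemma ftc_step (d j : ℕ) (hj : j + 1 < d) (hd2 : 2 ≤ d) (φ : ℝ → ℝ) (A B : ℝ)
    (hder : ∀ x ∈ Set.Ioo A B, HasDerivAt (deriv φ) (deriv (deriv φ) x) x)
    (hcont : ContinuousOn (deriv (deriv φ)) (Set.Ioo A B))
    (s : Fin d → ℝ) (hmem : ∀ c, s c ∈ Set.Ioo A B) (u : Fin j → ℝ) :
    ∫ x in (s ⟨j, by omega⟩)..(s ⟨j + 1, hj⟩), Edet d φ s (j + 1) (Fin.snoc u x)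
      = - Edet d φ s j u := by
  set a := s ⟨j, by omega⟩ with ha
  set b := s ⟨j + 1, hj⟩ with hb
  set A0 : Matrix (Fin d) (Fin d) ℝ := Matrix.of fun i col =>
    if h : (col : ℕ) < j then cder d φ (u ⟨col, h⟩) i else ccol d φ (s col) i with hA0
  set jc : Fin d := ⟨j, by omega⟩ with hjc
  set L : (Fin d → ℝ) →ₗ[ℝ] ℝ :=
    { toFun := fun v => (A0.updateCol jc v).det
      map_add' := fun v w => by simp [Matrix.det_updateCol_add]
      map_smul' := fun c v => by simp [Matrix.det_updateCol_smul] } with hL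
  have hjcv : (jc : ℕ) = j := rfl
  have hG : ∀ x : ℝ, Edet d φ s (j + 1) (Fin.snoc u x) = L (fun i => cder d φ x i) := by
    intro x
    show _ = (A0.updateCol jc _).det
    unfold Edet
    congr 1
    ext i col
    rw [Matrix.updateCol_apply]
    by_cases hc : col = jc
    · subst hc
      rw [if_pos rfl, Matrix.of_apply, dif_pos (show ((jc : ℕ) < j + 1) by omega)]
      congr 1
      simp [Fin.snoc, hjcv]
    · rw [if_neg hc]
      simp only [hA0, Matrix.of_apply]
      by_cases hlt : (col : ℕ) < j
      · rw [dif_pos (show (col : ℕ) < j + 1 by omega), dif_pos hlt]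
        congr 1
        simp [Fin.snoc, hlt]
      · have hne : ¬ ((col : ℕ) < j + 1) := by
          rcases Nat.lt_or_ge (col : ℕ) (j + 1) with h1 | h1
          · exfalso; exact hc (Fin.ext (by omega))
          · omega
        rw [dif_neg hne, dif_neg hlt]
  have key : ∀ x ∈ Set.uIcc a b,
      HasDerivAt (fun y => L (fun i => ccol d φ y i)) (L (fun i => cder d φ x i)) x := by
    intro x hx
    have hx' : x ∈ Set.Ioo A B :=
      (Set.ordConnected_Ioo.uIcc_subset (hmem _) (hmem _)) hx
    have hcols : HasDerivAt (fun y => (fun i => ccol d φ y i)) (fun i => cder d φ x i) x :=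
      hasDerivAt_pi.2 fun i => hasDerivAt_ccol d hd2 φ (hder x hx') i
    have := (LinearMap.toContinuousLinearMap L).hasFDerivAt.comp_hasDerivAt x hcols
    exact this
  have hint : IntervalIntegrable (fun x => L (fun i => cder d φ x i)) volume a b := by
    apply ContinuousOn.intervalIntegrable
    have hsub : Set.uIcc a b ⊆ Set.Ioo A B :=
      Set.ordConnected_Ioo.uIcc_subset (hmem _) (hmem _)
    have hmat : ContinuousOn (fun x => (fun i => cder d φ x i)) (Set.uIcc a b) := by
      apply continuousOn_pi.2
      intro i
      unfold cder
      split_ifs with h1 h2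
      · exact continuousOn_const
      · exact ((continuous_pow _).continuousOn).div_const _
      · exact hcont.mono hsub
    exact (LinearMap.toContinuousLinearMap L).continuous.comp_continuousOn hmat
  have hFTC := intervalIntegral.integral_eq_sub_of_hasDerivAt key hint
  calc ∫ x in a..b, Edet d φ s (j + 1) (Fin.snoc u x)
      = ∫ x in a..b, L (fun i => cder d φ x i) := by simp_rw [hG]
    _ = L (fun i => ccol d φ b i) - L (fun i => ccol d φ a i) := hFTC
    _ = - Edet d φ s j u := by
        have hv2 : ((⟨j + 1, hj⟩ : Fin d) : ℕ) = j + 1 := rfl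
        have hne : jc ≠ (⟨j + 1, hj⟩ : Fin d) := by
          intro hcon
          have := congrArg Fin.val hcon
          omega
        have hFb : L (fun i => ccol d φ b i) = 0 := by
          show (A0.updateCol jc _).det = 0
          apply Matrix.det_zero_of_column_eq hne
          intro k
          rw [Matrix.updateCol_apply, Matrix.updateCol_apply,
            if_pos rfl, if_neg (Ne.symm hne)]
          simp only [hA0, Matrix.of_apply]
          rw [dif_neg (by omega)]
        have hFa : L (fun i => ccol d φ a i) = Edet d φ s j u := by
          show (A0.updateCol jc _).det = _
          unfold Edet
          congr 1
          ext i col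
          rw [Matrix.updateCol_apply]
          by_cases hc : col = jc
          · subst hc
            rw [if_pos rfl, Matrix.of_apply, dif_neg (by omega)]
          · rw [if_neg hc]
        rw [hFb, hFa]
        ring

lemma iterInt_succ (k : ℕ) (f : (Fin (k + 1) → ℝ) → ℝ) (s : Fin (k + 2) → ℝ) :
    iterInt (k + 1) f s
      = ∫ x in (s 0)..(s 1), iterInt k (fun u => f (Fin.cons x u)) (fun i => s i.succ) := rfl

lemma iterInt_congr (k : ℕ) {f g : (Fin k → ℝ) → ℝ} (h : ∀ u, f u = g u)
    (s : Fin (k + 1) → ℝ) : iterInt k f s = iterInt k g s := by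
  rw [funext h]

lemma iterInt_const_mul (c : ℝ) : ∀ (k : ℕ) (f : (Fin k → ℝ) → ℝ) (s : Fin (k + 1) → ℝ),
    iterInt k (fun u => c * f u) s = c * iterInt k f s := by
  intro k
  induction k with
  | zero => intro f s; rfl
  | succ k ih =>
    intro f s
    rw [iterInt_succ, iterInt_succ, ← intervalIntegral.integral_const_mul]
    congr 1
    funext x
    exact ih _ _

lemma iterInt_snoc : ∀ (k : ℕ) (f : (Fin (k + 1) → ℝ) → ℝ) (t : Fin (k + 2) → ℝ),
    iterInt (k + 1) f t
      = iterInt k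
          (fun u => ∫ x in (t ⟨k, by omega⟩)..(t ⟨k + 1, by omega⟩), f (Fin.snoc u x))
          (fun i => t i.castSucc) := by
  intro k
  induction k with
  | zero =>
    intro f t
    rw [iterInt_succ]
    have h0 : (⟨0, by omega⟩ : Fin 2) = 0 := rfl
    have h1 : (⟨0 + 1, by omega⟩ : Fin 2) = 1 := rfl
    show _ = ∫ x in (t ⟨0, by omega⟩)..(t ⟨0 + 1, by omega⟩), f (Fin.snoc (fun i => i.elim0) x)
    rw [h0, h1]
    congr 1
    funext x
    show f (Fin.cons x (fun i => i.elim0)) = f (Fin.snoc (fun i => i.elim0) x)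
    congr 1
    funext i
    have : i = 0 := Fin.ext (by omega)
    subst this
    simp [Fin.snoc]
  | succ k ih =>
    intro f t
    rw [iterInt_succ, iterInt_succ]
    have hrw : ∀ x : ℝ, iterInt (k + 1) (fun u => f (Fin.cons x u)) (fun i => t i.succ)
        = iterInt k
            (fun u => ∫ y in (t ⟨k + 1, by omega⟩)..(t ⟨k + 1 + 1, by omega⟩),
              f (Fin.snoc (Fin.cons x u) y))
            (fun i => t ((i.castSucc).succ)) := by
      intro x
      rw [ih (fun u => f (Fin.cons x u)) (fun i => t i.succ)]
      have e1 : (Fin.succ (⟨k, by omega⟩ : Fin (k + 2))) = (⟨k + 1, by omega⟩ : Fin (k + 3)) := rfl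
      have e2 : (Fin.succ (⟨k + 1, by omega⟩ : Fin (k + 2)))
        = (⟨k + 1 + 1, by omega⟩ : Fin (k + 3)) := rfl
      show iterInt k
          (fun u => ∫ y in (t (Fin.succ ⟨k, by omega⟩))..(t (Fin.succ ⟨k + 1, by omega⟩)),
            f (Fin.cons x (Fin.snoc u y)))
          (fun i => t ((i.castSucc).succ)) = _
      rw [e1, e2]
      congr 1
      funext u
      congr 1
      funext y
      congr 1
      exact Fin.cons_snoc_eq_snoc_cons x u y
    have c0 : Fin.castSucc (0 : Fin (k + 2)) = (0 : Fin (k + 3)) := Fin.ext (by simp)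
    have c1 : Fin.castSucc (1 : Fin (k + 2)) = (1 : Fin (k + 3)) := Fin.ext (by simp)
    show (∫ x in (t 0)..(t 1), iterInt (k + 1) (fun u => f (Fin.cons x u)) (fun i => t i.succ))
      = ∫ x in (t (Fin.castSucc 0))..(t (Fin.castSucc 1)),
          iterInt k
            (fun u => ∫ y in (t ⟨k + 1, by omega⟩)..(t ⟨k + 1 + 1, by omega⟩),
              f (Fin.snoc (Fin.cons x u) y))
            (fun i => t ((i.succ).castSucc))
    rw [c0, c1]
    congr 1
    funext x
    rw [hrw x]
    congr 1

lemma Edet_zero (d : ℕ) (φ : ℝ → ℝ) (s : Fin d → ℝ) (v : Fin 0 → ℝ) :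
    Edet d φ s 0 v = Jdet d φ s := by
  unfold Edet Jdet ccol
  congr 1

lemma Edet_top (e : ℕ) (he : 1 ≤ e) (φ : ℝ → ℝ) (s : Fin (e + 1) → ℝ) (v : Fin e → ℝ) :
    Edet (e + 1) φ s e v = (-1 : ℝ) ^ e * Jdet e (deriv φ) v := by
  unfold Edet
  rw [Matrix.det_succ_row_zero, Finset.sum_eq_single (Fin.last e)]
  · rw [Fin.succAbove_last]
    have hval : ((Fin.last e) : ℕ) = e := rfl
    have hM0 : (Matrix.of fun i col : Fin (e + 1) =>
        if h : (col : ℕ) < e then cder (e + 1) φ (v ⟨col, h⟩) i else ccol (e + 1) φ (s col) i)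
        0 (Fin.last e) = 1 := by
      rw [Matrix.of_apply, dif_neg (by omega)]
      unfold ccol
      rw [if_pos (by simp; omega)]
      simp
    rw [hM0, hval, mul_one]
    congr 1
    unfold Jdet
    congr 1
    ext i jx
    rw [Matrix.submatrix_apply, Matrix.of_apply, Matrix.of_apply,
      dif_pos (show ((jx.castSucc : Fin (e + 1)) : ℕ) < e from jx.isLt)]
    unfold cder
    have hsv : ((Fin.succ i : Fin (e + 1)) : ℕ) = (i : ℕ) + 1 := rfl
    rw [if_neg (by omega)]
    by_cases hc : (i : ℕ) + 1 < e
    · rw [if_pos (by omega : ((Fin.succ i : Fin (e+1)) : ℕ) + 1 < e + 1), if_pos hc]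
      congr 1
    · rw [if_neg (by omega : ¬ (((Fin.succ i : Fin (e+1)) : ℕ) + 1 < e + 1)), if_neg hc]
      exact congrArg _ (congrArg v (Fin.ext rfl))
  · intro b _ hb
    have hbv : (b : ℕ) < e := by
      have h1 := b.isLt
      have hl : ((Fin.last e) : ℕ) = e := rfl
      rcases Nat.lt_or_ge (b : ℕ) e with h | h
      · exact h
      · exfalso; exact hb (Fin.ext (by omega))
    rw [Matrix.of_apply, dif_pos hbv]
    unfold cder
    simp
  · intro h; exact absurd (Finset.mem_univ _) h

lemma main_ind (m : ℕ) (φ : ℝ → ℝ) (A B : ℝ)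
    (hder : ∀ x ∈ Set.Ioo A B, HasDerivAt (deriv φ) (deriv (deriv φ) x) x)
    (hcont : ContinuousOn (deriv (deriv φ)) (Set.Ioo A B))
    (s : Fin (m + 3) → ℝ) (hmem : ∀ c, s c ∈ Set.Ioo A B) :
    ∀ j (hj : j ≤ m + 2),
      iterInt j (fun v => Edet (m + 3) φ s j v)
        (fun i : Fin (j + 1) => s (Fin.castLE (by omega) i))
        = (-1 : ℝ) ^ j * Jdet (m + 3) φ s := by
  intro j
  induction j with
  | zero =>
    intro hj
    show Edet (m + 3) φ s 0 (fun i => i.elim0) = (-1 : ℝ) ^ 0 * Jdet (m + 3) φ s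
    rw [Edet_zero, pow_zero, one_mul]
  | succ j ih =>
    intro hj
    rw [iterInt_snoc]
    refine Eq.trans (iterInt_congr j (g := fun u => (-1 : ℝ) * Edet (m + 3) φ s j u)
      (fun u => ?_) _) ?_
    · have h2 := ftc_step (m + 3) j (by omega) (by omega) φ A B hder hcont s hmem u
      exact h2.trans (neg_one_mul _).symm
    · rw [iterInt_const_mul]
      rw [show ((-1 : ℝ) ^ (j + 1) * Jdet (m + 3) φ s)
        = -1 * ((-1 : ℝ) ^ j * Jdet (m + 3) φ s) by ring]
      congr 1
      exact ih (by omega)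

end Stmt4Aux

/-- for `d = m+3 ≥ 3` and `φ` of class `C^d` on an interval containing
`s_1 ≤ … ≤ s_d`, one has
`𝒥_d(s;φ) = ∫_{s_1}^{s_2} ⋯ ∫_{s_{d-1}}^{s_d} 𝒥_{d-1}(σ;φ') dσ_{d-1} ⋯ dσ_1`. -/
theorem stmt4 (m : ℕ) (φ : ℝ → ℝ) (A B : ℝ)
    (hφ : ContDiffOn ℝ (m + 3) φ (Set.Ioo A B))
    (s : Fin (m + 3) → ℝ) (hs : Monotone s) (hmem : ∀ j, s j ∈ Set.Ioo A B) :
    Jdet (m + 3) φ s = iterInt (m + 2) (fun σ => Jdet (m + 2) (deriv φ) σ) s := by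
  have hO : IsOpen (Set.Ioo A B) := isOpen_Ioo
  have h1 : ContDiffOn ℝ ((m : ℕ) + 2) (deriv φ) (Set.Ioo A B) := by
    apply hφ.deriv_of_isOpen hO
    norm_cast
  have h2 : ContDiffOn ℝ ((m : ℕ) + 1) (deriv (deriv φ)) (Set.Ioo A B) := by
    apply h1.deriv_of_isOpen hO
    norm_cast
  have hder : ∀ x ∈ Set.Ioo A B, HasDerivAt (deriv φ) (deriv (deriv φ) x) x := by
    intro x hx
    have hdiff : DifferentiableOn ℝ (deriv φ) (Set.Ioo A B) := by
      apply h1.differentiableOn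
      simp
    exact (hdiff.differentiableAt (hO.mem_nhds hx)).hasDerivAt
  have hcont : ContinuousOn (deriv (deriv φ)) (Set.Ioo A B) := h2.continuousOn
  have hsq : (-1 : ℝ) ^ (m + 2) * (-1 : ℝ) ^ (m + 2) = 1 := by
    rw [← pow_add, ← two_mul, pow_mul]
    norm_num
  have hmain := Stmt4Aux.main_ind m φ A B hder hcont s hmem (m + 2) le_rfl
  have htop : ∀ σ : Fin (m + 2) → ℝ,
      Jdet (m + 2) (deriv φ) σ
        = (-1 : ℝ) ^ (m + 2) * Stmt4Aux.Edet (m + 3) φ s (m + 2) σ := by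
    intro σ
    have h := Stmt4Aux.Edet_top (m + 2) (by omega) φ s σ
    have h' : Stmt4Aux.Edet (m + 3) φ s (m + 2) σ
        = (-1 : ℝ) ^ (m + 2) * Jdet (m + 2) (deriv φ) σ := h
    rw [h', ← mul_assoc, hsq, one_mul]
  calc Jdet (m + 3) φ s
      = (-1 : ℝ) ^ (m + 2) * ((-1 : ℝ) ^ (m + 2) * Jdet (m + 3) φ s) := by
        rw [← mul_assoc, hsq, one_mul]
    _ = (-1 : ℝ) ^ (m + 2) * iterInt (m + 2) (fun v => Stmt4Aux.Edet (m + 3) φ s (m + 2) v)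
          (fun i : Fin (m + 3) => s (Fin.castLE (by omega) i)) := by rw [hmain]
    _ = iterInt (m + 2) (fun v => (-1 : ℝ) ^ (m + 2) * Stmt4Aux.Edet (m + 3) φ s (m + 2) v)
          (fun i : Fin (m + 3) => s (Fin.castLE (by omega) i)) :=
        (Stmt4Aux.iterInt_const_mul _ _ _ _).symm
    _ = iterInt (m + 2) (fun σ => Jdet (m + 2) (deriv φ) σ) s := by
        have heq := Stmt4Aux.iterInt_congr (m + 2)
          (f := fun v => (-1 : ℝ) ^ (m + 2) * Stmt4Aux.Edet (m + 3) φ s (m + 2) v)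
          (g := fun σ => Jdet (m + 2) (deriv φ) σ)
          (fun u => (htop u).symm) s
        exact heq
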